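/- In the subspace T' = T∖{a} of the five-point space T, the set {x,y,b} is regular closed, its interior in T' equals {x,y}, and {x,y} is not a preconnected subspace of T'; hence {x,y,b} is not internally connected. -/
import Mathlib


/-- The five-point space `T = {x, y, z, a, b}` (five pairwise distinct points). -/
inductive Pt : Type
  | x | y | z | a | b
deriving DecidableEq

open Pt

/-- The topology on `T` generated by the subbasis `{x,z}`, `{y,z}`, `{x,a,y}`. -/
instance : TopologicalSpace Pt :=
  TopologicalSpace.generateFrom ({{x, z}, {y, z}, {x, a, y}} : Set (Set Pt))

lemma open_b_univ {U : Set Pt} (hU : IsOpen U) (hb : b ∈ U) : ∀ t, t ∈ U := by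
  induction hU with
  | basic V hV =>
    rcases hV with h | h | h <;> subst h <;> simp at hb
  | univ => intro t; trivial
  | inter U V _ _ ihU ihV =>
    intro t; exact ⟨ihU hb.1 t, ihV hb.2 t⟩
  | sUnion S _ ih =>
    obtain ⟨V, hV, hbV⟩ := hb
    exact fun t => ⟨V, hV, ih V hV hbV t⟩

lemma isOpen_basic (V : Set Pt)
    (h : V ∈ ({{x, z}, {y, z}, {x, a, y}} : Set (Set Pt))) : IsOpen V :=
  TopologicalSpace.GenerateOpen.basic V h

lemma open_sub (V : Set Pt) (h : IsOpen V) :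
    IsOpen (Subtype.val ⁻¹' V : Set {t : Pt // t ≠ a}) :=
  h.preimage continuous_subtype_val

lemma xy_open : IsOpen (Subtype.val ⁻¹' ({x, y} : Set Pt) : Set {t : Pt // t ≠ a}) := by
  have h := open_sub {x, a, y} (isOpen_basic _ (by simp))
  convert h using 1
  ext ⟨t, ht⟩
  rcases t <;> simp_all [Set.mem_preimage]
  exact ht rfl

lemma interior_eq :
    interior (Subtype.val ⁻¹' ({x, y, b} : Set Pt) : Set {t : Pt // t ≠ a}) =
      (Subtype.val ⁻¹' ({x, y} : Set Pt) : Set {t : Pt // t ≠ a}) := by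
  apply Set.Subset.antisymm
  · -- interior ⊆ {x,y}
    obtain ⟨U, hU, hUe⟩ := isOpen_induced_iff.mp
      (isOpen_interior (s := (Subtype.val ⁻¹' ({x, y, b} : Set Pt) : Set {t : Pt // t ≠ a})))
    rw [← hUe]
    intro ⟨t, ht⟩ htU
    have hsub : (Subtype.val ⁻¹' U : Set {t : Pt // t ≠ a}) ⊆
        Subtype.val ⁻¹' ({x, y, b} : Set Pt) := hUe ▸ interior_subset
    have htmem : t ∈ ({x, y, b} : Set Pt) := hsub htU
    have hb : t = b → False := by
      intro hb
      have := hsub (show (⟨z, by decide⟩ : {t : Pt // t ≠ a}) ∈ Subtype.val ⁻¹' U from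
        open_b_univ hU (by simpa [hb] using htU) z)
      simp at this
    clear hsub hUe htU
    rcases t with _ | _ | _ | _ | _ <;> simp_all
  · apply interior_maximal _ xy_open
    intro ⟨t, ht⟩ h
    simp only [Set.mem_preimage] at h ⊢
    simp only [Set.mem_insert_iff, Set.mem_singleton_iff] at h
    rcases h with h | h <;> subst h <;> simp

lemma closure_eq :
    closure (Subtype.val ⁻¹' ({x, y} : Set Pt) : Set {t : Pt // t ≠ a}) =
      (Subtype.val ⁻¹' ({x, y, b} : Set Pt) : Set {t : Pt // t ≠ a}) := by
  apply Set.Subset.antisymm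
  · -- {x,y,b} is closed: complement is val⁻¹' {z}
    have hz : IsOpen (Subtype.val ⁻¹' ({z} : Set Pt) : Set {t : Pt // t ≠ a}) := by
      have h1 := isOpen_basic {x, z} (by simp)
      have h2 := isOpen_basic {y, z} (by simp)
      have := open_sub _ (h1.inter h2)
      convert this using 1
      ext ⟨t, ht⟩
      rcases t <;> simp_all
    have hclosed : IsClosed (Subtype.val ⁻¹' ({x, y, b} : Set Pt) : Set {t : Pt // t ≠ a}) := by
      rw [← isOpen_compl_iff]
      convert hz using 1
      ext ⟨t, ht⟩
      rcases t <;> simp_all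
      exact absurd rfl ht
    apply closure_minimal _ hclosed
    intro ⟨t, ht⟩ h
    simp only [Set.mem_preimage] at h ⊢
    simp only [Set.mem_insert_iff, Set.mem_singleton_iff] at h
    rcases h with h | h <;> subst h <;> simp
  · intro ⟨t, ht⟩ h
    simp only [Set.mem_preimage] at h
    rcases t with _ | _ | _ | _ | _
    · exact subset_closure (by simp)
    · exact subset_closure (by simp)
    · simp at h
    · exact absurd rfl ht
    · -- t = b: every open nbhd of b is everything
      rw [mem_closure_iff]
      intro o ho hbo
      obtain ⟨U, hU, hUe⟩ := isOpen_induced_iff.mp ho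
      have hbU : b ∈ U := by rw [← hUe] at hbo; exact hbo
      refine ⟨⟨x, by decide⟩, ?_, by simp⟩
      rw [← hUe]
      exact open_b_univ hU hbU x

lemma not_preconn :
    ¬ IsPreconnected (Subtype.val ⁻¹' ({x, y} : Set Pt) : Set {t : Pt // t ≠ a}) := by
  intro h
  have hu := open_sub {x, z} (isOpen_basic _ (by simp))
  have hv := open_sub {y, z} (isOpen_basic _ (by simp))
  have hcov : (Subtype.val ⁻¹' ({x, y} : Set Pt) : Set {t : Pt // t ≠ a}) ⊆
      Subtype.val ⁻¹' {x, z} ∪ Subtype.val ⁻¹' {y, z} := by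
    intro ⟨t, ht⟩ hmem
    simp only [Set.mem_preimage] at hmem ⊢
    simp only [Set.mem_insert_iff, Set.mem_singleton_iff] at hmem
    rcases hmem with h | h <;> subst h <;> simp
  have h1 : ((Subtype.val ⁻¹' ({x, y} : Set Pt) : Set {t : Pt // t ≠ a}) ∩
      Subtype.val ⁻¹' {x, z}).Nonempty := ⟨⟨x, by decide⟩, by simp⟩
  have h2 : ((Subtype.val ⁻¹' ({x, y} : Set Pt) : Set {t : Pt // t ≠ a}) ∩
      Subtype.val ⁻¹' {y, z}).Nonempty := ⟨⟨y, by decide⟩, by simp⟩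
  obtain ⟨⟨t, ht⟩, hmem⟩ := h _ _ hu hv hcov h1 h2
  simp only [Set.mem_inter_iff, Set.mem_preimage] at hmem
  rcases t <;> simp_all

/-- In the subspace T' = T∖{a}, the set {x,y,b} is regular closed, its
interior in T' equals {x,y}, and {x,y} is not a preconnected subspace of T'; hence
{x,y,b} is not internally connected. -/
theorem stmt9 :
    (Subtype.val ⁻¹' ({x, y, b} : Set Pt) : Set {t : Pt // t ≠ a}) =
      closure (interior (Subtype.val ⁻¹' ({x, y, b} : Set Pt) : Set {t : Pt // t ≠ a})) ∧
    interior (Subtype.val ⁻¹' ({x, y, b} : Set Pt) : Set {t : Pt // t ≠ a}) =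
      (Subtype.val ⁻¹' ({x, y} : Set Pt) : Set {t : Pt // t ≠ a}) ∧
    ¬ IsPreconnected (Subtype.val ⁻¹' ({x, y} : Set Pt) : Set {t : Pt // t ≠ a}) ∧
    ¬ IsConnected
      (interior (Subtype.val ⁻¹' ({x, y, b} : Set Pt) : Set {t : Pt // t ≠ a})) := by
  refine ⟨?_, interior_eq, not_preconn, ?_⟩
  · rw [interior_eq, closure_eq]
  · rw [interior_eq]
    exact fun h => not_preconn h.isPreconnected
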